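/- Let Σ be a finite alphabet with |Σ| = σ ≥ 2, let k be a natural number, and let w be a word over Σ with alph(w) = Σ and k > ι(w) such that for all words w' over Σ with ι(w') = ι(w) we have |ScatFact_k(w)| ≥ |ScatFact_k(w')|. Then |ScatFact_k(w)| = Σ_{j=0}^{ι(w)} C(k, j) · (σ − 1)^{k − j}, where C(k, j) denotes the binomial coefficient. -/

import Mathlib

open List

universe u
variable {α : Type u}

/-- `ScatFact k w` is the set of scattered factors (subsequences) of `w` of length exactly `k`. -/
def ScatFact (k : ℕ) (w : List α) : Set (List α) :=
  {v | v.length = k ∧ v.Sublist w}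

/-- `w` is `k`-universal over the alphabet `S`: every word of length `k` over `S`
is a scattered factor of `w`. -/
def IsKUniversal [DecidableEq α] (S : Finset α) (k : ℕ) (w : List α) : Prop :=
  ∀ v : List α, v.length = k → (∀ x ∈ v, x ∈ S) → v.Sublist w

/-- The universality index of `w` over the alphabet `S`: the largest `k` such that
`w` is `k`-universal over `S`. -/
noncomputable def univIdx [DecidableEq α] (S : Finset α) (w : List α) : ℕ :=
  sSup {k | IsKUniversal S k w}

/-- `IsArchFact S w inners modus rest` says that `w` has the arch factorization
`w = ar_1 ⋯ ar_n · rest` over the alphabet `S`, where the `i`-th arch is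
`ar_i = inners[i] ++ [modus[i]]`: each arch contains every letter of `S`,
the last letter of each arch occurs only once within the arch, and the
alphabet of the rest is a proper subset of `S`. -/
def IsArchFact [DecidableEq α] (S : Finset α) (w : List α)
    (inners : List (List α)) (modus : List α) (rest : List α) : Prop :=
  inners.length = modus.length ∧
  w = (List.zipWith (fun inn m => inn ++ [m]) inners modus).flatten ++ rest ∧
  (∀ p ∈ List.zip inners modus, ∀ x ∈ S, x ∈ p.1 ++ [p.2]) ∧
  (∀ p ∈ List.zip inners modus, p.2 ∉ p.1) ∧
  rest.toFinset ⊂ S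

/-- `v` is perfect `k`-universal over `S`: `alph(v) = S`, the universality index of `v`
over `S` is `k`, and the rest of its arch factorization over `S` is empty. -/
def IsPerfectUniv [DecidableEq α] (S : Finset α) (k : ℕ) (v : List α) : Prop :=
  v.toFinset = S ∧ univIdx S v = k ∧ ∃ inners modus, IsArchFact S v inners modus []

/-- `v` is minimal perfect `k`-universal over `S`. -/
def IsMinPerfectUniv [DecidableEq α] (S : Finset α) (k : ℕ) (v : List α) : Prop :=
  IsPerfectUniv S k v ∧ ∀ v' : List α, IsPerfectUniv S k v' → v.length ≤ v'.length

/-- `nextAlphPos w i s` (positions `1`-indexed): the least position `j` such that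
`w[i+1..j]` contains exactly `s` distinct letters, or `none` (representing `-1`)
if `w[i+1..|w|]` contains fewer than `s` distinct letters. -/
noncomputable def nextAlphPos [DecidableEq α] (w : List α) (i s : ℕ) : Option ℕ :=
  if (w.drop i).toFinset.card < s then none
  else some (sInf {j | ((w.drop i).take (j - i)).toFinset.card = s})

/-- The letter of `w` at (1-indexed) position `j`. -/
def letterAt [Inhabited α] (w : List α) (j : ℕ) : α := w.getD (j - 1) default

/-- The word over `Fin σ` with `ι` arches, whose first arch is `a_1 a_2 ⋯ a_σ`
and each later arch is the reverse of the previous one. -/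
def wmin (σ ι : ℕ) : List (Fin σ) :=
  ((List.range ι).map (fun i =>
    if i % 2 = 0 then List.finRange σ else (List.finRange σ).reverse)).flatten

/-! ### Auxiliary development -/

section Auxiliary

/-- The numeric quantity appearing in the theorem. -/
def phi (σ k i : ℕ) : ℕ := ∑ j ∈ Finset.range (i+1), Nat.choose k j * (σ-1)^(k-j)

lemma phi_mono {σ k : ℕ} {i i' : ℕ} (h : i ≤ i') : phi σ k i ≤ phi σ k i' :=
  Finset.sum_le_sum_of_subset (Finset.range_subset_range.2 (by omega))

lemma phi_zero (σ k : ℕ) : phi σ k 0 = (σ-1)^k := by simp [phi]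

lemma phi_self {σ : ℕ} (hσ : 1 ≤ σ) (k : ℕ) : phi σ k k = σ^k := by
  have h := add_pow (σ-1) 1 k
  have hσ' : σ - 1 + 1 = σ := by omega
  rw [hσ'] at h
  unfold phi
  rw [← Finset.sum_range_reflect, h]
  apply Finset.sum_congr rfl
  intro j hj
  simp only [Finset.mem_range] at hj
  have hj' : j ≤ k := by omega
  have h1 : k + 1 - 1 - j = k - j := by omega
  have h2 : k - (k - j) = j := by omega
  rw [h1, Nat.choose_symm hj', h2]
  push_cast
  ring

lemma phi_succ {σ k i : ℕ} (h : i + 1 ≤ k) :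
    phi σ (k+1) (i+1) = (σ-1) * phi σ k (i+1) + phi σ k i := by
  unfold phi
  rw [Finset.sum_range_succ' (fun j => Nat.choose (k+1) j * (σ-1)^(k+1-j)) (i+1),
      Finset.mul_sum,
      Finset.sum_range_succ' (fun j => (σ-1) * (Nat.choose k j * (σ-1)^(k-j))) (i+1)]
  have key : ∀ j ∈ Finset.range (i+1),
      Nat.choose (k+1) (j+1) * (σ-1)^(k+1-(j+1)) =
      (σ-1) * (Nat.choose k (j+1) * (σ-1)^(k-(j+1))) + Nat.choose k j * (σ-1)^(k-j) := by
    intro j hj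
    simp only [Finset.mem_range] at hj
    have h1 : k+1-(j+1) = k-j := by omega
    have h2 : k-j = (k-(j+1)) + 1 := by omega
    rw [h1, Nat.choose_succ_succ, h2, pow_succ]
    ring
  rw [Finset.sum_congr rfl key, Finset.sum_add_distrib]
  simp only [Nat.choose_zero_right, Nat.sub_zero, one_mul, pow_succ]
  ring

variable [Fintype α] [DecidableEq α]

/-- The finset of all lists of length `k`. -/
def Lk (k : ℕ) : Finset (List α) :=
  (Finset.univ : Finset (List.Vector α k)).image List.Vector.toList

lemma mem_Lk {k : ℕ} {v : List α} : v ∈ (Lk k : Finset (List α)) ↔ v.length = k := by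
  constructor
  · intro h
    simp only [Lk, Finset.mem_image] at h
    obtain ⟨u, -, rfl⟩ := h
    exact u.toList_length
  · intro h
    exact Finset.mem_image.2 ⟨⟨v, h⟩, Finset.mem_univ _, rfl⟩

lemma card_Lk (k : ℕ) : (Lk (α := α) k).card = Fintype.card α ^ k := by
  rw [Lk, Finset.card_image_of_injective _ List.Vector.toList_injective,
    Finset.card_univ, card_vector]

lemma Lk_filter_succ (k : ℕ) (P : List α → Prop) [DecidablePred P] :
    ((Lk (α := α) (k+1)).filter P).card
      = ∑ x : α, ((Lk (α := α) k).filter (fun t => P (x :: t))).card := by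
  have hset : (Lk (α := α) (k+1)).filter P =
      Finset.univ.biUnion
        (fun x : α => ((Lk (α := α) k).filter (fun t => P (x :: t))).image (x :: ·)) := by
    ext v
    simp only [Finset.mem_filter, Finset.mem_biUnion, Finset.mem_univ, true_and,
      Finset.mem_image, mem_Lk]
    constructor
    · rintro ⟨hlen, hP⟩
      cases v with
      | nil => simp at hlen
      | cons x t => exact ⟨x, t, ⟨by simpa using hlen, hP⟩, rfl⟩
    · rintro ⟨x, t, ⟨hlen, hP⟩, rfl⟩
      exact ⟨by simp [hlen], hP⟩
  rw [hset, Finset.card_biUnion]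
  · exact Finset.sum_congr rfl fun x _ =>
      Finset.card_image_of_injective _ (fun a b h => by injection h)
  · intro x _ y _ hxy
    simp only [Finset.disjoint_left, Finset.mem_image]
    rintro v ⟨t, -, rfl⟩ ⟨t', -, h⟩
    injection h with h1 h2
    exact hxy h1.symm

lemma sublist_drop_of_cons_sublist {x : α} {t w : List α} (h : (x :: t) <+ w) :
    t <+ w.drop (w.idxOf x + 1) := by
  induction w with
  | nil => exact absurd h (by simp)
  | cons y w ih =>
    cases h with
    | cons _ h' =>
      by_cases hyx : y = x
      · subst hyx
        rw [List.idxOf_cons_self]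
        have h2 := (ih h').trans (List.drop_sublist _ _)
        simpa using h2
      · rw [List.idxOf_cons_ne _ (by exact fun hc => hyx (by simpa using hc))]
        simpa [List.drop_succ_cons] using ih h'
    | cons_cons _ h' =>
      rw [List.idxOf_cons_self]
      simpa using h'

lemma not_mem_take_indexOf (x : α) : ∀ l : List α, x ∉ l.take (l.idxOf x) := by
  intro l
  induction l with
  | nil => simp
  | cons y l ih =>
    by_cases hxy : y = x
    · subst hxy; simp [List.idxOf_cons_self]
    · rw [List.idxOf_cons_ne _ (by exact fun hc => hxy (by simpa using hc)),
        List.take_succ_cons]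
      simp only [List.mem_cons]
      rintro (rfl | h)
      · exact hxy rfl
      · exact ih h

lemma eq_take_cons_drop {x : α} {v : List α} (hx : x ∈ v) :
    v = v.take (v.idxOf x) ++ x :: v.drop (v.idxOf x + 1) := by
  have hlt : v.idxOf x < v.length := List.idxOf_lt_length_iff.2 hx
  conv_lhs => rw [← List.take_append_drop (v.idxOf x) v]
  rw [List.drop_eq_getElem_cons hlt, List.getElem_idxOf hlt]

lemma cons_sublist_of_tail {x : α} {t w : List α} (hx : x ∈ w)
    (h : t <+ w.drop (w.idxOf x + 1)) : x :: t <+ w := by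
  conv_rhs => rw [eq_take_cons_drop hx]
  calc x :: t = [x] ++ t := rfl
    _ <+ [x] ++ w.drop (w.idxOf x + 1) := (List.Sublist.refl [x]).append h
    _ <+ w.take (w.idxOf x) ++ x :: w.drop (w.idxOf x + 1) :=
      List.sublist_append_right _ _

lemma indexOf_eq {x : α} : ∀ (l : List α) (i : ℕ) (hi : i < l.length),
    l[i] = x → x ∉ l.take i → l.idxOf x = i := by
  intro l
  induction l with
  | nil => intro i hi; simp at hi
  | cons y l ih =>
    intro i hi hx hnx
    cases i with
    | zero =>
      simp only [List.getElem_cons_zero] at hx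
      subst hx
      exact List.idxOf_cons_self
    | succ i =>
      rw [List.take_succ_cons] at hnx
      have hxy : y ≠ x := fun h => hnx (by simp [h])
      rw [List.idxOf_cons_ne _ (by exact fun hc => hxy (by simpa using hc))]
      have : l.idxOf x = i := by
        apply ih i (by simpa using hi)
        · simpa using hx
        · exact fun h => hnx (by simp [h])
      omega

/-! ### `univIdx` facts -/

lemma isKUniversal_zero (w : List α) : IsKUniversal (Finset.univ : Finset α) 0 w := by
  intro v hv _
  rw [List.length_eq_zero_iff] at hv
  subst hv
  exact List.nil_sublist w

lemma univSet_bdd [Nonempty α] (w : List α) :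
    BddAbove {m | IsKUniversal (Finset.univ : Finset α) m w} := by
  refine ⟨w.length, fun m hm => ?_⟩
  have h := hm (List.replicate m (Classical.arbitrary α)) (by simp) (by simp)
  simpa using h.length_le

lemma isKUniversal_univIdx [Nonempty α] (w : List α) :
    IsKUniversal (Finset.univ : Finset α) (univIdx Finset.univ w) w :=
  Nat.sSup_mem ⟨0, isKUniversal_zero w⟩ (univSet_bdd w)

lemma le_univIdx [Nonempty α] {w : List α} {m : ℕ}
    (h : IsKUniversal (Finset.univ : Finset α) m w) : m ≤ univIdx Finset.univ w :=
  le_csSup (univSet_bdd w) h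

lemma univIdx_le [Nonempty α] {w : List α} {n : ℕ}
    (h : ∀ m, IsKUniversal (Finset.univ : Finset α) m w → m ≤ n) :
    univIdx (Finset.univ : Finset α) w ≤ n :=
  csSup_le ⟨0, isKUniversal_zero w⟩ h

lemma isKUniversal_mono_len [Nonempty α] {w : List α} {m n : ℕ} (hmn : m ≤ n)
    (h : IsKUniversal (Finset.univ : Finset α) n w) :
    IsKUniversal (Finset.univ : Finset α) m w := by
  intro v hv _
  have h2 := h (v ++ List.replicate (n - m) (Classical.arbitrary α))
    (by simp [hv]; omega) (by simp)
  exact (List.sublist_append_left _ _).trans h2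

lemma univIdx_mono [Nonempty α] {u w : List α} (h : u <+ w) :
    univIdx (Finset.univ : Finset α) u ≤ univIdx Finset.univ w := by
  apply univIdx_le
  intro m hm
  exact le_univIdx (fun v hv hv2 => (hm v hv hv2).trans h)

lemma exists_arch [Nonempty α] (w : List α) (hw : ∀ a : α, a ∈ w) :
    ∃ x : α, univIdx (Finset.univ : Finset α) (w.drop (w.idxOf x + 1)) + 1
      ≤ univIdx (Finset.univ : Finset α) w := by
  classical
  set T : Set ℕ := {n | ∀ a : α, a ∈ w.take n} with hT
  have hTw : w.length ∈ T := by
    intro a; rw [List.take_length]; exact hw a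
  have hTne : T.Nonempty := ⟨w.length, hTw⟩
  have hnT : sInf T ∈ T := Nat.sInf_mem hTne
  have hn_le : sInf T ≤ w.length := Nat.sInf_le hTw
  have hn0 : sInf T ≠ 0 := by
    intro h0
    have := hnT (Classical.arbitrary α)
    rw [h0] at this
    simp at this
  obtain ⟨m, hm⟩ : ∃ m, sInf T = m + 1 := ⟨sInf T - 1, by omega⟩
  have hm_lt : m < w.length := by omega
  set x := w[m] with hxdef
  have hm_not : m ∉ T := fun hmem => by
    have := Nat.sInf_le hmem; omega
  have hxt : x ∉ w.take m := by
    intro hmem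
    apply hm_not
    intro a
    have ha := hnT a
    rw [hm, List.take_succ, List.getElem?_eq_getElem hm_lt] at ha
    simp only [Option.toList_some, List.mem_append, List.mem_singleton] at ha
    rcases ha with ha | ha
    · exact ha
    · rw [ha]; exact hmem
  have hidx : w.idxOf x = m := indexOf_eq w m hm_lt rfl hxt
  refine ⟨x, ?_⟩
  rw [hidx]
  apply le_univIdx
  intro v hv _
  cases v with
  | nil => simp at hv
  | cons v0 v' =>
    have h1 : [v0] <+ w.take (m+1) := by
      rw [List.singleton_sublist, ← hm]
      exact hnT v0
    have h2 : v' <+ w.drop (m+1) :=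
      isKUniversal_univIdx (w.drop (m+1)) v' (by simpa using hv) (by simp)
    have h3 := h1.append h2
    rw [List.take_append_drop] at h3
    simpa using h3

/-! ### Scattered factors as a finset -/

def scatFinset (k : ℕ) (w : List α) : Finset (List α) :=
  (Lk k).filter (fun v => v <+ w)

lemma coe_scatFinset (k : ℕ) (w : List α) :
    ScatFact k w = (scatFinset k w : Set (List α)) := by
  ext v
  simp [ScatFact, scatFinset, mem_Lk]

lemma ncard_scatFact (k : ℕ) (w : List α) :
    (ScatFact k w).ncard = (scatFinset k w).card := by
  rw [coe_scatFinset, Set.ncard_coe_finset]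

/-! ### Counting words with a bounded number of occurrences of a letter -/

lemma count_card (a : α) : ∀ k i : ℕ, i ≤ k →
    ((Lk (α := α) k).filter (fun v => v.count a ≤ i)).card = phi (Fintype.card α) k i := by
  intro k
  induction k with
  | zero =>
    intro i hi
    interval_cases i
    have hL : (Lk (α := α) 0) = {([] : List α)} := by
      ext v; simp [mem_Lk, List.length_eq_zero_iff]
    rw [hL, Finset.filter_singleton]
    simp [phi]
  | succ k ih =>
    intro i hi
    have hσpos : 0 < Fintype.card α := Fintype.card_pos_iff.2 ⟨a⟩
    rw [Lk_filter_succ k (fun v => v.count a ≤ i)]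
    rw [Finset.sum_eq_sum_sdiff_singleton_add (Finset.mem_univ a)]
    have h1 : ∀ x ∈ Finset.univ \ {a},
        ((Lk (α := α) k).filter fun t => (x :: t).count a ≤ i).card
          = ((Lk (α := α) k).filter fun t => t.count a ≤ i).card := by
      intro x hx
      simp only [Finset.mem_sdiff, Finset.mem_singleton] at hx
      congr 1
      apply Finset.filter_congr
      intro t _
      simp [List.count_cons, hx.2]
    have h2 : ((Lk (α := α) k).filter fun t => (a :: t).count a ≤ i)
        = ((Lk (α := α) k).filter fun t => t.count a + 1 ≤ i) := by
      apply Finset.filter_congr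
      intro t _
      simp [List.count_cons]
    rw [Finset.sum_congr rfl h1, h2, Finset.sum_const, smul_eq_mul]
    have hcard : (Finset.univ \ {a} : Finset α).card = Fintype.card α - 1 := by
      rw [Finset.card_sdiff_of_subset (by simp), Finset.card_univ, Finset.card_singleton]
    rw [hcard]
    rcases Nat.eq_zero_or_pos i with rfl | hipos
    · have hempty : ((Lk (α := α) k).filter fun t => t.count a + 1 ≤ 0) = ∅ := by
        apply Finset.filter_false_of_mem
        intro t _
        omega
      rw [hempty, ih 0 (by omega)]
      simp [phi_zero, pow_succ]
      ring
    · obtain ⟨i', rfl⟩ : ∃ i', i = i' + 1 := ⟨i - 1, by omega⟩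
      have h3 : ((Lk (α := α) k).filter fun t => t.count a + 1 ≤ i' + 1)
          = ((Lk (α := α) k).filter fun t => t.count a ≤ i') := by
        apply Finset.filter_congr
        intro t _
        simp
      rw [h3]
      rcases Nat.lt_or_ge (i'+1) (k+1) with hlt | hge
      · rw [ih (i'+1) (by omega), ih i' (by omega), phi_succ (by omega)]
      · have hik : i' + 1 = k + 1 := by omega
        have hA : ((Lk (α := α) k).filter fun t => t.count a ≤ i' + 1) = Lk (α := α) k := by
          apply Finset.filter_true_of_mem
          intro t ht
          have : t.count a ≤ t.length := List.count_le_length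
          rw [mem_Lk.1 ht] at this
          omega
        have hB : ((Lk (α := α) k).filter fun t => t.count a ≤ i') = Lk (α := α) k := by
          apply Finset.filter_true_of_mem
          intro t ht
          have : t.count a ≤ t.length := List.count_le_length
          rw [mem_Lk.1 ht] at this
          omega
        rw [hA, hB, card_Lk, hik, phi_self (by omega)]
        have hs : Fintype.card α - 1 + 1 = Fintype.card α := by omega
        calc (Fintype.card α - 1) * Fintype.card α ^ k + Fintype.card α ^ k
            = (Fintype.card α - 1 + 1) * Fintype.card α ^ k := by ring
          _ = Fintype.card α ^ (k+1) := by rw [hs, pow_succ]; ring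

/-! ### Upper bound -/

lemma scat_upper [Nonempty α] : ∀ k : ℕ, ∀ (w : List α) (i : ℕ),
    univIdx (Finset.univ : Finset α) w ≤ i → i ≤ k →
    (scatFinset k w).card ≤ phi (Fintype.card α) k i := by
  have hσ : 1 ≤ Fintype.card α := Fintype.card_pos
  have trivialBound : ∀ (k : ℕ) (w : List α),
      (scatFinset k w).card ≤ phi (Fintype.card α) k k := by
    intro k w
    calc (scatFinset k w).card ≤ (Lk (α := α) k).card :=
          Finset.card_le_card (Finset.filter_subset _ _)
      _ = Fintype.card α ^ k := card_Lk k
      _ = phi (Fintype.card α) k k := (phi_self hσ k).symm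
  intro k
  induction k with
  | zero =>
    intro w i h1 h2
    interval_cases i
    exact trivialBound 0 w
  | succ k ih =>
    intro w i hw hik
    rcases Nat.lt_or_ge i (k+1) with hlt | hge
    · rcases Nat.eq_zero_or_pos i with rfl | hipos
      · -- some letter is missing from w
        have h0 : univIdx (Finset.univ : Finset α) w = 0 := le_antisymm hw (Nat.zero_le _)
        have hnot : ¬ IsKUniversal (Finset.univ : Finset α) 1 w := by
          intro h
          have := le_univIdx h
          omega
        have hexy : ∃ y : α, y ∉ w := by
          by_contra hc
          push_neg at hc
          apply hnot
          intro v hv _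
          cases v with
          | nil => simp at hv
          | cons y v' =>
            have hv' : v' = [] := by
              rw [← List.length_eq_zero_iff]
              simpa using hv
            subst hv'
            exact List.singleton_sublist.2 (hc y)
        obtain ⟨y, hy⟩ := hexy
        have hsub : scatFinset (k+1) w ⊆ (Lk (α := α) (k+1)).filter (fun v => v.count y ≤ 0) := by
          intro v hv
          simp only [scatFinset, Finset.mem_filter] at hv ⊢
          refine ⟨hv.1, ?_⟩
          have hyv : y ∉ v := fun hmem => hy (hv.2.subset hmem)
          simp [List.count_eq_zero.2 hyv]
        calc (scatFinset (k+1) w).card ≤ _ := Finset.card_le_card hsub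
          _ = phi (Fintype.card α) (k+1) 0 := count_card y (k+1) 0 (by omega)
      · obtain ⟨i', rfl⟩ : ∃ i', i = i' + 1 := ⟨i - 1, by omega⟩
        have hik' : i' + 1 ≤ k := by omega
        have hdecomp : (scatFinset (k+1) w).card ≤
            ∑ x : α, (scatFinset k (w.drop (w.idxOf x + 1))).card := by
          rw [show scatFinset (k+1) w = (Lk (α := α) (k+1)).filter (fun v => v <+ w) from rfl,
              Lk_filter_succ k (fun v => v <+ w)]
          apply Finset.sum_le_sum
          intro x _
          apply Finset.card_le_card
          intro t ht
          simp only [Finset.mem_filter, scatFinset] at ht ⊢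
          exact ⟨ht.1, sublist_drop_of_cons_sublist ht.2⟩
        rcases Nat.lt_or_ge (univIdx (Finset.univ : Finset α) w) (i'+1) with hcase | hcase
        · have hb : ∀ x : α,
              (scatFinset k (w.drop (w.idxOf x + 1))).card ≤ phi (Fintype.card α) k i' := by
            intro x
            apply ih _ i' _ (by omega)
            exact le_trans (univIdx_mono (List.drop_sublist _ _)) (by omega)
          have hm : phi (Fintype.card α) k i' ≤ phi (Fintype.card α) k (i'+1) :=
            phi_mono (by omega)
          calc (scatFinset (k+1) w).card
              ≤ ∑ x : α, (scatFinset k (w.drop (w.idxOf x + 1))).card := hdecomp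
            _ ≤ ∑ _x : α, phi (Fintype.card α) k i' :=
                Finset.sum_le_sum (fun x _ => hb x)
            _ = Fintype.card α * phi (Fintype.card α) k i' := by
                rw [Finset.sum_const, Finset.card_univ, smul_eq_mul]
            _ ≤ (Fintype.card α - 1) * phi (Fintype.card α) k (i'+1)
                + phi (Fintype.card α) k i' := by
                have hsub1 : Fintype.card α - 1 + 1 = Fintype.card α := by omega
                have : Fintype.card α * phi (Fintype.card α) k i'
                    = (Fintype.card α - 1) * phi (Fintype.card α) k i'
                      + phi (Fintype.card α) k i' := by
                  calc Fintype.card α * phi (Fintype.card α) k i'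
                      = (Fintype.card α - 1 + 1) * phi (Fintype.card α) k i' := by rw [hsub1]
                    _ = _ := by ring
                rw [this]
                have := Nat.mul_le_mul_left (Fintype.card α - 1) hm
                omega
            _ = phi (Fintype.card α) (k+1) (i'+1) := (phi_succ hik').symm
        · have heq : univIdx (Finset.univ : Finset α) w = i' + 1 := le_antisymm hw hcase
          have hall : ∀ a : α, a ∈ w := by
            have h1 : IsKUniversal (Finset.univ : Finset α) 1 w :=
              isKUniversal_mono_len (by omega) (isKUniversal_univIdx w)
            intro a
            exact List.singleton_sublist.1 (h1 [a] rfl (by simp))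
          obtain ⟨x₀, hx₀⟩ := exists_arch w hall
          rw [heq] at hx₀
          have hb0 : (scatFinset k (w.drop (w.idxOf x₀ + 1))).card
              ≤ phi (Fintype.card α) k i' :=
            ih _ i' (by omega) (by omega)
          have hb : ∀ x : α, (scatFinset k (w.drop (w.idxOf x + 1))).card
              ≤ phi (Fintype.card α) k (i'+1) := by
            intro x
            apply ih _ (i'+1) _ hik'
            exact le_trans (univIdx_mono (List.drop_sublist _ _)) (by omega)
          have hcard : (Finset.univ \ {x₀} : Finset α).card = Fintype.card α - 1 := by
            rw [Finset.card_sdiff_of_subset (by simp), Finset.card_univ, Finset.card_singleton]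
          have hsum1 : ∑ x ∈ Finset.univ \ {x₀},
              (scatFinset k (w.drop (w.idxOf x + 1))).card
              ≤ (Fintype.card α - 1) * phi (Fintype.card α) k (i'+1) := by
            calc ∑ x ∈ Finset.univ \ {x₀}, (scatFinset k (w.drop (w.idxOf x + 1))).card
                ≤ ∑ _x ∈ Finset.univ \ {x₀}, phi (Fintype.card α) k (i'+1) :=
                  Finset.sum_le_sum (fun x _ => hb x)
              _ = (Fintype.card α - 1) * phi (Fintype.card α) k (i'+1) := by
                  rw [Finset.sum_const, smul_eq_mul, hcard]
          calc (scatFinset (k+1) w).card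
              ≤ ∑ x : α, (scatFinset k (w.drop (w.idxOf x + 1))).card := hdecomp
            _ = ∑ x ∈ Finset.univ \ {x₀}, (scatFinset k (w.drop (w.idxOf x + 1))).card
                + (scatFinset k (w.drop (w.idxOf x₀ + 1))).card :=
                Finset.sum_eq_sum_sdiff_singleton_add (Finset.mem_univ x₀) _
            _ ≤ (Fintype.card α - 1) * phi (Fintype.card α) k (i'+1)
                + phi (Fintype.card α) k i' := add_le_add hsum1 hb0
            _ = phi (Fintype.card α) (k+1) (i'+1) := (phi_succ hik').symm
    · have hi : i = k + 1 := le_antisymm hik hge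
      subst hi
      exact trivialBound (k+1) w

/-! ### Lower bound construction -/

lemma sublist_flatten_replicate (e : List α) : ∀ (m : ℕ) (v : List α),
    v.length ≤ m → (∀ y ∈ v, y ∈ e) → v <+ (List.replicate m e).flatten := by
  intro m
  induction m with
  | zero =>
    intro v hv _
    have : v = [] := by
      rw [← List.length_eq_zero_iff]
      omega
    subst this
    exact List.nil_sublist _
  | succ m ihm =>
    intro v hv hmem
    cases v with
    | nil => exact List.nil_sublist _
    | cons y t =>
      rw [List.replicate_succ, List.flatten_cons]
      have h1 : [y] <+ e := List.singleton_sublist.2 (hmem y (by simp))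
      have h2 : t <+ (List.replicate m e).flatten :=
        ihm t (by simpa using hv) (fun z hz => hmem z (by simp [hz]))
      simpa using h1.append h2

noncomputable def uA (a : α) (k : ℕ) : List α :=
  (List.replicate k ((Finset.univ.erase a).toList)).flatten

lemma not_mem_uA (a : α) (k : ℕ) : a ∉ uA a k := by
  intro h
  simp only [uA, List.mem_flatten] at h
  obtain ⟨l, hl, hal⟩ := h
  rw [List.eq_of_mem_replicate hl] at hal
  simp at hal

lemma sublist_uA {a : α} {k : ℕ} {v : List α} (hlen : v.length ≤ k) (hv : a ∉ v) :
    v <+ uA a k := by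
  apply sublist_flatten_replicate _ k v hlen
  intro y hy
  have hya : y ≠ a := fun h => hv (h ▸ hy)
  simp [Finset.mem_toList, Finset.mem_erase, hya]

noncomputable def wA (a : α) (k : ℕ) : ℕ → List α
  | 0 => uA a k
  | (i+1) => uA a k ++ a :: wA a k i

lemma count_wA (a : α) (k : ℕ) : ∀ i, (wA a k i).count a = i := by
  intro i
  induction i with
  | zero => simp [wA, List.count_eq_zero.2 (not_mem_uA a k)]
  | succ i ih =>
    simp [wA, List.count_append, List.count_cons, ih,
      List.count_eq_zero.2 (not_mem_uA a k)]

lemma sublist_wA (a : α) (k : ℕ) : ∀ (i : ℕ) (v : List α),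
    v.length ≤ k → v.count a ≤ i → v <+ wA a k i := by
  intro i
  induction i with
  | zero =>
    intro v hlen hc
    exact sublist_uA hlen (List.count_eq_zero.1 (Nat.le_zero.1 hc))
  | succ i ih =>
    intro v hlen hc
    by_cases ha : a ∈ v
    · have hv := eq_take_cons_drop ha
      set j := v.idxOf a with hj
      have h1 : v.take j <+ uA a k := by
        apply sublist_uA _ (not_mem_take_indexOf a v)
        calc (v.take j).length ≤ v.length := by
              rw [List.length_take]; omega
          _ ≤ k := hlen
      have h2len : (v.drop (j+1)).length ≤ k := by
        rw [List.length_drop]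
        omega
      have hcnt : (v.drop (j+1)).count a ≤ i := by
        have hsplit : v.count a = (v.take j).count a + ((a :: v.drop (j+1)).count a) := by
          conv_lhs => rw [hv]
          rw [List.count_append]
        rw [List.count_eq_zero.2 (not_mem_take_indexOf a v)] at hsplit
        simp [List.count_cons] at hsplit
        omega
      have h2 : a :: v.drop (j+1) <+ a :: wA a k i := (ih _ h2len hcnt).cons₂ a
      have hfin := h1.append h2
      rw [← hv] at hfin
      exact hfin
    · exact (sublist_uA hlen ha).trans (List.sublist_append_left _ _)

lemma univIdx_wA [Nonempty α] (a : α) {k i : ℕ} (hik : i ≤ k) :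
    univIdx (Finset.univ : Finset α) (wA a k i) = i := by
  apply _root_.le_antisymm
  · apply univIdx_le
    intro m hm
    have hrep := hm (List.replicate m a) (by simp) (by simp)
    have hcnt := hrep.count_le a
    rw [List.count_replicate_self, count_wA] at hcnt
    exact hcnt
  · apply le_univIdx
    intro v hv _
    apply sublist_wA a k i v (by omega)
    calc v.count a ≤ v.length := List.count_le_length
      _ = i := hv

end Auxiliary

theorem stmt3 {α : Type u} [Fintype α] [DecidableEq α]
    (hsigma : 2 ≤ Fintype.card α) (k : ℕ) (w : List α) (halph : ∀ a : α, a ∈ w)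
    (hk : univIdx Finset.univ w < k)
    (hmax : ∀ w' : List α, univIdx Finset.univ w' = univIdx Finset.univ w →
        (ScatFact k w').ncard ≤ (ScatFact k w).ncard) :
    (ScatFact k w).ncard =
      ∑ j ∈ Finset.range (univIdx Finset.univ w + 1),
        Nat.choose k j * (Fintype.card α - 1) ^ (k - j) := by
  haveI hne : Nonempty α := Fintype.card_pos_iff.mp (by omega)
  set ι := univIdx (Finset.univ : Finset α) w with hι
  have a : α := Classical.arbitrary α
  have hupper : (scatFinset k w).card ≤ phi (Fintype.card α) k ι :=
    scat_upper k w ι le_rfl (by omega)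
  have hlower : phi (Fintype.card α) k ι ≤ (scatFinset k w).card := by
    have h1 : ((Lk (α := α) k).filter (fun v => v.count a ≤ ι)).card
        = phi (Fintype.card α) k ι := count_card a k ι (by omega)
    have h2 : ((Lk (α := α) k).filter (fun v => v.count a ≤ ι)) ⊆ scatFinset k (wA a k ι) := by
      intro v hv
      simp only [Finset.mem_filter, mem_Lk, scatFinset] at hv ⊢
      exact ⟨hv.1, sublist_wA a k ι v (le_of_eq hv.1) hv.2⟩
    have h3 := hmax (wA a k ι) (univIdx_wA a (by omega))
    rw [ncard_scatFact, ncard_scatFact] at h3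
    calc phi (Fintype.card α) k ι = _ := h1.symm
      _ ≤ (scatFinset k (wA a k ι)).card := Finset.card_le_card h2
      _ ≤ (scatFinset k w).card := h3
  rw [ncard_scatFact]
  exact _root_.le_antisymm hupper hlower
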